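/- arXiv:2303.05468 — 2 statements merged into one kernel-verified Lean document; each statement's English description precedes it below -/
import Mathlib

section
/- Let n ≥ 4. Suppose (d, β_1, β_2) and (d', β_1', β_2') are two triples of elements of the quasi-abelian group QA_n such that in each triple: the first entry lies in QA_n \ H_1, the second entry has order 2, the third entry has order 2^{n-2}, the relation β_1 β_2 d^2 = 1 (respectively β_1' β_2' d'^2 = 1) holds, and the three entries generate QA_n. Then there exists an automorphism φ of QA_n with φ(d) = d', φ(β_1) = β_1' and φ(β_2) = β_2'. -/
/-- The relators of the quasi-abelian group `QA_n`:
`x^(2^(n-1)) = 1`, `y^2 = 1`, `y * x * y⁻¹ = x^(2^(n-2)+1)`.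
The generator `x` is encoded by `true` and `y` by `false`. -/
def qaRels (n : ℕ) : Set (FreeGroup Bool) :=
  {FreeGroup.of true ^ 2 ^ (n - 1),
   FreeGroup.of false ^ 2,
   FreeGroup.of false * FreeGroup.of true * (FreeGroup.of false)⁻¹ *
     (FreeGroup.of true ^ (2 ^ (n - 2) + 1))⁻¹}

/-- The quasi-abelian group `QA_n`, given by the presentation
`⟨x, y ∣ x^(2^(n-1)) = y^2 = 1, y x y⁻¹ = x^(2^(n-2)+1)⟩`. -/
abbrev QA (n : ℕ) : Type := PresentedGroup (qaRels n)

/-- The generator `x` of `QA_n`. -/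
def qx (n : ℕ) : QA n := PresentedGroup.of true

/-- The generator `y` of `QA_n`. -/
def qy (n : ℕ) : QA n := PresentedGroup.of false

/-- The index-two subgroup `H₁ = ⟨x², y⟩` of `QA_n`. -/
def H1 (n : ℕ) : Subgroup (QA n) := Subgroup.closure {qx n ^ 2, qy n}



/-- The twist unit `1 + e·2k` in `ZMod (4k)`. -/
def tw (k : ℕ) (e : ZMod 2) : ZMod (4*k) := 1 + (e.val : ZMod (4*k)) * (2*(k : ZMod (4*k)))

lemma zmod2_cases (e : ZMod 2) : e = 0 ∨ e = 1 := by revert e; decide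

lemma zmod2_add_self (e : ZMod 2) : e + e = 0 := by revert e; decide

lemma tw_zero (k : ℕ) : tw k 0 = 1 := by
  unfold tw
  rw [show ((0:ZMod 2).val) = 0 from rfl]
  push_cast; ring

lemma tw_one (k : ℕ) : tw k 1 = 1 + 2*(k : ZMod (4*k)) := by
  unfold tw
  rw [show ((1:ZMod 2).val) = 1 from rfl]
  push_cast; ring

lemma h4k (k : ℕ) : 4*(k : ZMod (4*k)) = 0 := by
  have := ZMod.natCast_self (4*k)
  push_cast at this
  linear_combination this

lemma tw_mul (k : ℕ) (e f : ZMod 2) : tw k (e+f) = tw k e * tw k f := by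
  have h4 := h4k k
  rcases zmod2_cases e with he | he <;> rcases zmod2_cases f with hf | hf <;> subst he <;> subst hf <;>
    simp only [tw_zero, tw_one, add_zero, zero_add, one_mul, mul_one]
  rw [show (1+1 : ZMod 2) = 0 by decide, tw_zero]
  linear_combination (-1 - (k : ZMod (4*k))) * h4

lemma tw_sq (k : ℕ) (e : ZMod 2) : tw k e * tw k e = 1 := by
  rw [← tw_mul, zmod2_add_self, tw_zero]

/-- Concrete model of the quasi-abelian group: pairs `(a,e)` representing `x^a y^e`. -/
@[ext]
structure QM (k : ℕ) where
  a : ZMod (4*k)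
  e : ZMod 2

instance (k : ℕ) : One (QM k) := ⟨⟨0, 0⟩⟩
instance (k : ℕ) : Mul (QM k) := ⟨fun g h => ⟨g.a + h.a * tw k g.e, g.e + h.e⟩⟩
instance (k : ℕ) : Inv (QM k) := ⟨fun g => ⟨-(g.a * tw k g.e), g.e⟩⟩

lemma qm_mul_def {k : ℕ} (a b : ZMod (4*k)) (e f : ZMod 2) :
    (⟨a, e⟩ * ⟨b, f⟩ : QM k) = ⟨a + b * tw k e, e + f⟩ := rfl

lemma qm_one_def {k : ℕ} : (1 : QM k) = ⟨0, 0⟩ := rfl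

lemma qm_inv_def {k : ℕ} (a : ZMod (4*k)) (e : ZMod 2) :
    (⟨a, e⟩ : QM k)⁻¹ = ⟨-(a * tw k e), e⟩ := rfl

lemma qm_mul_assoc {k : ℕ} (x y z : QM k) : x * y * z = x * (y * z) := by
  obtain ⟨a, e⟩ := x; obtain ⟨b, f⟩ := y; obtain ⟨c, g⟩ := z
  simp only [qm_mul_def, tw_mul]
  congr 1
  · ring
  · rw [add_assoc]

lemma qm_one_mul {k : ℕ} (x : QM k) : 1 * x = x := by
  obtain ⟨a, e⟩ := x
  rw [qm_one_def, qm_mul_def, tw_zero, mul_one, zero_add, zero_add]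

lemma qm_mul_one {k : ℕ} (x : QM k) : x * 1 = x := by
  obtain ⟨a, e⟩ := x
  rw [qm_one_def, qm_mul_def, zero_mul, add_zero, add_zero]

lemma qm_inv_mul {k : ℕ} (x : QM k) : x⁻¹ * x = 1 := by
  obtain ⟨a, e⟩ := x
  rw [qm_inv_def, qm_mul_def, qm_one_def]
  congr 1
  · ring
  · exact zmod2_add_self e

instance (k : ℕ) : Group (QM k) where
  mul_assoc := qm_mul_assoc
  one_mul := qm_one_mul
  mul_one := qm_mul_one
  inv_mul_cancel := qm_inv_mul

lemma qm_pow_zero_e {k : ℕ} (c : ZMod (4*k)) (m : ℕ) :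
    (⟨c, 0⟩ : QM k) ^ m = ⟨(m : ZMod (4*k)) * c, 0⟩ := by
  induction m with
  | zero => rw [pow_zero, qm_one_def]; congr 1; push_cast; ring
  | succ m ih =>
      rw [pow_succ, ih, qm_mul_def, tw_zero]
      refine QM.ext ?_ ?_ <;> dsimp only
      · push_cast; ring
      · rw [add_zero]

lemma qm_sq {k : ℕ} (g : QM k) : g ^ 2 = ⟨g.a * (1 + tw k g.e), 0⟩ := by
  obtain ⟨a, e⟩ := g
  rw [pow_two, qm_mul_def]
  congr 1
  · ring
  · exact zmod2_add_self e

lemma qm_pow_4k {k : ℕ} (g : QM k) : g ^ (4*k) = 1 := by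
  have h4 := h4k k
  rw [show 4*k = 2*(2*k) by ring, pow_mul, qm_sq, qm_pow_zero_e, qm_one_def]
  congr 1
  rcases zmod2_cases g.e with he | he <;> rw [he] <;> [rw [tw_zero]; rw [tw_one]] <;> push_cast
  · linear_combination g.a * h4
  · linear_combination (g.a + (k : ZMod (4*k)) * g.a) * h4

lemma qm_conj {k : ℕ} (hkk : 2*(k : ZMod (4*k))*(k : ZMod (4*k)) = 0)
    (a b : ZMod (4*k)) (e : ZMod 2) (hb : (⟨b, 1⟩ : QM k) ^ 2 = 1) :
    (⟨b, 1⟩ : QM k) * ⟨a, e⟩ * (⟨b, 1⟩ : QM k)⁻¹ = (⟨a, e⟩ : QM k) ^ (2*k+1) := by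
  have h4 := h4k k
  have hbb : b * (2 + 2*(k : ZMod (4*k))) = 0 := by
    rw [qm_sq] at hb
    have := congrArg QM.a hb
    simp only [tw_one, qm_one_def] at this
    linear_combination this
  have hpow : (⟨a, e⟩ : QM k) ^ (2*k+1) =
      ⟨(k : ZMod (4*k)) * (a * (1 + tw k e)) + a, e⟩ := by
    rw [pow_succ, pow_mul, qm_sq, qm_pow_zero_e, qm_mul_def, tw_zero]
    congr 1
    · ring
    · simp
  rw [hpow, qm_inv_def, qm_mul_def, qm_mul_def]
  refine QM.ext ?_ ?_ <;> dsimp only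
  · rw [tw_mul]
    rcases zmod2_cases e with he | he <;> subst he <;>
      simp only [tw_zero, tw_one, add_zero, zero_add, mul_one, one_mul] <;>
      set K : ZMod (4*k) := (k : ZMod (4*k)) with hK
    · linear_combination (-b - K*b) * h4
    · linear_combination (-3*K)*hbb + (-3*b - 4*K*b - a)*hkk
  · rcases zmod2_cases e with he | he <;> subst he <;> decide


section QASide

variable {n : ℕ}

lemma qa_rel_mk {r : FreeGroup Bool} (hr : r ∈ qaRels n) :
    PresentedGroup.mk (qaRels n) r = 1 :=
  (QuotientGroup.eq_one_iff r).mpr (Subgroup.subset_normalClosure hr)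

lemma mem1 : FreeGroup.of true ^ 2 ^ (n - 1) ∈ qaRels n := Set.mem_insert _ _
lemma mem2 : FreeGroup.of false ^ 2 ∈ qaRels n :=
  Set.mem_insert_of_mem _ (Set.mem_insert _ _)
lemma mem3 : FreeGroup.of false * FreeGroup.of true * (FreeGroup.of false)⁻¹ *
    (FreeGroup.of true ^ (2 ^ (n - 2) + 1))⁻¹ ∈ qaRels n :=
  Set.mem_insert_of_mem _ (Set.mem_insert_of_mem _ rfl)

lemma qx_pow_eq_one : qx n ^ 2 ^ (n-1) = 1 := by
  have h := qa_rel_mk (mem1 (n := n))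
  rwa [map_pow] at h

lemma qy_sq : qy n ^ 2 = 1 := by
  have h := qa_rel_mk (mem2 (n := n))
  rwa [map_pow] at h

lemma yx_rel : qy n * qx n = qx n ^ (2 ^ (n-2) + 1) * qy n := by
  have h := qa_rel_mk (mem3 (n := n))
  simp only [map_mul, map_inv, map_pow] at h
  have h2 : qy n * qx n * (qy n)⁻¹ = qx n ^ (2 ^ (n-2) + 1) :=
    mul_inv_eq_one.mp h
  exact mul_inv_eq_iff_eq_mul.mp h2

lemma y_xpow (a : ℕ) : qy n * qx n ^ a = qx n ^ (a * (2 ^ (n-2) + 1)) * qy n := by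
  induction a with
  | zero => simp
  | succ a ih =>
      rw [pow_succ, ← mul_assoc, ih, mul_assoc, yx_rel, ← mul_assoc, ← pow_add]
      ring_nf

lemma ypow_xpow (b a : ℕ) :
    qy n ^ b * qx n ^ a = qx n ^ (a * (2 ^ (n-2) + 1) ^ b) * qy n ^ b := by
  induction b generalizing a with
  | zero => simp
  | succ b ih =>
      rw [pow_succ, mul_assoc, y_xpow, ← mul_assoc, ih,
        show a * (2 ^ (n-2) + 1) * (2 ^ (n-2) + 1) ^ b = a * (2 ^ (n-2) + 1) ^ (b+1) by ring,
        mul_assoc]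

lemma qx_pow_inv (a : ℕ) : (qx n ^ a)⁻¹ = qx n ^ (a * (2 ^ (n-1) - 1)) := by
  symm
  rw [eq_inv_iff_mul_eq_one, ← pow_add]
  have h : a * (2 ^ (n-1) - 1) + a = a * 2 ^ (n-1) := by
    have h1 : (1:ℕ) ≤ 2 ^ (n-1) := Nat.one_le_two_pow
    cases' Nat.exists_eq_add_of_le h1 with m hm
    rw [hm, Nat.add_sub_cancel_left]; ring
  rw [h, mul_comm, pow_mul, qx_pow_eq_one, one_pow]

lemma qy_pow_inv (b : ℕ) : (qy n ^ b)⁻¹ = qy n ^ b := by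
  symm
  rw [eq_inv_iff_mul_eq_one, ← pow_add, show b + b = 2 * b by ring, pow_mul, qy_sq, one_pow]

/-- Normal form: every element of `QA n` is `x^a y^b`. -/
lemma qa_nf (g : QA n) : ∃ a b : ℕ, g = qx n ^ a * qy n ^ b := by
  have hT : g ∈ Subgroup.closure (Set.range (PresentedGroup.of : Bool → QA n)) := by
    rw [PresentedGroup.closure_range_of]; trivial
  refine Subgroup.closure_induction ?_ ?_ ?_ ?_ hT
  · rintro x ⟨b, rfl⟩
    cases b
    · exact ⟨0, 1, by simp [qy]⟩
    · exact ⟨1, 0, by simp [qx]⟩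
  · exact ⟨0, 0, by simp⟩
  · rintro x y _ _ ⟨a, b, rfl⟩ ⟨a', b', rfl⟩
    refine ⟨a + a' * (2 ^ (n-2) + 1) ^ b, b + b', ?_⟩
    rw [mul_assoc, ← mul_assoc (qy n ^ b), ypow_xpow, pow_add, pow_add]
    group
  · rintro x _ ⟨a, b, rfl⟩
    refine ⟨(a * (2 ^ (n-1) - 1)) * (2 ^ (n-2) + 1) ^ b, b, ?_⟩
    rw [mul_inv_rev, qx_pow_inv, qy_pow_inv, ypow_xpow]

end QASide


section Model2

lemma qm_YXY (k : ℕ) : (⟨0,1⟩ : QM k) * ⟨1,0⟩ * (⟨0,1⟩ : QM k)⁻¹ = ⟨tw k 1, 0⟩ := by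
  rw [qm_inv_def, qm_mul_def, qm_mul_def]
  refine QM.ext ?_ ?_ <;> dsimp only
  · rw [zero_mul, neg_zero, zero_mul, add_zero, zero_add, one_mul]
  · show (1 : ZMod 2) + 0 + 1 = 0
    decide

lemma X_pow (k m : ℕ) : (⟨1, 0⟩ : QM k) ^ m = ⟨(m : ZMod (4*k)), 0⟩ := by
  rw [qm_pow_zero_e, mul_one]

lemma Y_pow (k m : ℕ) : (⟨0, 1⟩ : QM k) ^ m = ⟨0, (m : ZMod 2)⟩ := by
  induction m with
  | zero => rw [pow_zero, qm_one_def]; exact QM.ext rfl (by push_cast; ring)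
  | succ m ih =>
      rw [pow_succ, ih, qm_mul_def, zero_mul, add_zero]
      exact QM.ext rfl (by push_cast; ring)

end Model2

section Rho

/-- Images of the generators in the model. -/
def lift_fun (k : ℕ) : Bool → QM k := fun b => cond b ⟨1, 0⟩ ⟨0, 1⟩

lemma lifts (n : ℕ) (hn : 4 ≤ n) :
    ∀ r ∈ qaRels n, FreeGroup.lift (lift_fun (2^(n-3))) r = 1 := by
  set k := 2^(n-3) with hk
  have e1 : (2:ℕ)^(n-1) = 4*k := by
    rw [hk, show (4:ℕ) = 2^2 from rfl, ← pow_add]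
    congr 1
    omega
  have e2 : (2:ℕ)^(n-2) = 2*k := by
    rw [hk, show (2:ℕ)*2^(n-3) = 2^(n-3)*2 by ring, ← pow_succ]
    congr 1
    omega
  intro r hr
  rcases hr with rfl | rfl | rfl
  · rw [map_pow, FreeGroup.lift_apply_of]
    show (⟨1,0⟩ : QM k) ^ 2^(n-1) = 1
    rw [X_pow, e1, ZMod.natCast_self, qm_one_def]
  · rw [map_pow, FreeGroup.lift_apply_of]
    show (⟨0,1⟩ : QM k) ^ 2 = 1
    rw [Y_pow, qm_one_def]
    exact QM.ext rfl (show ((2:ℕ) : ZMod 2) = 0 by decide)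
  · simp only [map_mul, map_inv, map_pow, FreeGroup.lift_apply_of]
    rw [mul_inv_eq_one]
    show (⟨0,1⟩ : QM k) * ⟨1,0⟩ * (⟨0,1⟩ : QM k)⁻¹ = (⟨1,0⟩ : QM k) ^ (2^(n-2)+1)
    rw [qm_YXY, X_pow]
    refine QM.ext ?_ rfl
    dsimp only
    rw [tw_one, e2]
    push_cast
    ring

/-- The isomorphism from `QA n` onto the concrete model. -/
def rho (n : ℕ) (hn : 4 ≤ n) : QA n →* QM (2^(n-3)) :=
  PresentedGroup.toGroup (lifts n hn)

lemma rho_qx (n : ℕ) (hn : 4 ≤ n) : rho n hn (qx n) = ⟨1, 0⟩ :=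
  PresentedGroup.toGroup.of (lifts n hn)

lemma rho_qy (n : ℕ) (hn : 4 ≤ n) : rho n hn (qy n) = ⟨0, 1⟩ :=
  PresentedGroup.toGroup.of (lifts n hn)

lemma rho_nf (n : ℕ) (hn : 4 ≤ n) (a b : ℕ) :
    rho n hn (qx n ^ a * qy n ^ b) = ⟨(a : ZMod (4*2^(n-3))), (b : ZMod 2)⟩ := by
  rw [map_mul, map_pow, map_pow, rho_qx, rho_qy, X_pow, Y_pow, qm_mul_def,
    zero_mul, add_zero, zero_add]

/-- The normal-form section of `rho`. -/
def fm (n : ℕ) (g : QM (2^(n-3))) : QA n := qx n ^ g.a.val * qy n ^ g.e.val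

lemma pow_mod_helper {G : Type*} [Group G] (g : G) (m : ℕ) (hg : g ^ m = 1) (a : ℕ) :
    g ^ (a % m) = g ^ a := by
  conv_rhs => rw [← Nat.div_add_mod a m]
  rw [pow_add, pow_mul, hg, one_pow, one_mul]

lemma fm_surj (n : ℕ) (hn : 4 ≤ n) : Function.Surjective (fm n) := by
  intro g
  obtain ⟨a, b, rfl⟩ := qa_nf g
  refine ⟨⟨(a : ZMod (4*2^(n-3))), (b : ZMod 2)⟩, ?_⟩
  unfold fm
  dsimp only
  have h4 : qx n ^ (4*2^(n-3)) = 1 := by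
    rw [show 4*2^(n-3) = 2^(n-1) by
      rw [show (4:ℕ) = 2^2 from rfl, ← pow_add]; congr 1; omega]
    exact qx_pow_eq_one
  rw [ZMod.val_natCast, ZMod.val_natCast, pow_mod_helper (qx n) _ h4,
    pow_mod_helper (qy n) _ qy_sq]

lemma rho_fm (n : ℕ) (hn : 4 ≤ n) (g : QM (2^(n-3))) : rho n hn (fm n g) = g := by
  haveI : NeZero (4*2^(n-3)) := ⟨by positivity⟩
  unfold fm
  rw [rho_nf, ZMod.natCast_zmod_val, ZMod.natCast_zmod_val]

lemma rho_inj (n : ℕ) (hn : 4 ≤ n) : Function.Injective (rho n hn) := by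
  intro u v huv
  obtain ⟨p, rfl⟩ := fm_surj n hn u
  obtain ⟨q, rfl⟩ := fm_surj n hn v
  rw [rho_fm, rho_fm] at huv
  rw [huv]

lemma fm_rho (n : ℕ) (hn : 4 ≤ n) (x : QA n) : fm n (rho n hn x) = x :=
  rho_inj n hn (by rw [rho_fm])

end Rho

section Theta

lemma ofadd_one_pow (b : ℕ) :
    (Multiplicative.ofAdd (1 : ZMod 2)) ^ b = Multiplicative.ofAdd ((b : ZMod 2)) := by
  induction b with
  | zero => push_cast; rfl
  | succ b ih =>
      rw [pow_succ, ih, ← ofAdd_add]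
      push_cast
      rfl

lemma ofadd_sq : (Multiplicative.ofAdd (1 : ZMod 2)) ^ 2 = 1 := by decide

/-- The homomorphism `QA n → ZMod 2` counting occurrences of `y`. -/
def theta1 (n : ℕ) : QA n →* Multiplicative (ZMod 2) :=
  PresentedGroup.toGroup (f := fun t => cond t 1 (Multiplicative.ofAdd 1)) (by
    intro r hr
    rcases hr with rfl | rfl | rfl
    · rw [map_pow, FreeGroup.lift_apply_of]
      show (1 : Multiplicative (ZMod 2)) ^ 2^(n-1) = 1
      rw [one_pow]
    · rw [map_pow, FreeGroup.lift_apply_of]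
      exact ofadd_sq
    · simp only [map_mul, map_inv, map_pow, FreeGroup.lift_apply_of]
      show Multiplicative.ofAdd 1 * 1 * (Multiplicative.ofAdd (1:ZMod 2))⁻¹ *
        ((1 : Multiplicative (ZMod 2)) ^ (2^(n-2)+1))⁻¹ = 1
      rw [one_pow, mul_one, inv_one, mul_one, mul_inv_cancel])

/-- The homomorphism `QA n → ZMod 2` counting occurrences of `x` and `y`. -/
def theta2 (n : ℕ) (hn : 4 ≤ n) : QA n →* Multiplicative (ZMod 2) :=
  PresentedGroup.toGroup (f := fun _ => Multiplicative.ofAdd 1) (by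
    intro r hr
    have hpow : ∀ m : ℕ, (Multiplicative.ofAdd (1 : ZMod 2)) ^ (2 * m) = 1 := by
      intro m
      rw [pow_mul, ofadd_sq, one_pow]
    rcases hr with rfl | rfl | rfl
    · rw [map_pow, FreeGroup.lift_apply_of]
      show (Multiplicative.ofAdd (1 : ZMod 2)) ^ 2^(n-1) = 1
      rw [show (2:ℕ)^(n-1) = 2 * 2^(n-2) by rw [← pow_succ']; congr 1; omega]
      exact hpow _
    · rw [map_pow, FreeGroup.lift_apply_of]
      exact ofadd_sq
    · simp only [map_mul, map_inv, map_pow, FreeGroup.lift_apply_of]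
      have h2 : (Multiplicative.ofAdd (1 : ZMod 2)) ^ (2^(n-2)+1) =
          Multiplicative.ofAdd 1 := by
        rw [pow_succ, show (2:ℕ)^(n-2) = 2 * 2^(n-3) by rw [← pow_succ']; congr 1; omega,
          hpow, one_mul]
      rw [h2, mul_inv_cancel_right, mul_inv_cancel])

lemma theta1_qy (n : ℕ) : theta1 n (qy n) = Multiplicative.ofAdd 1 :=
  PresentedGroup.toGroup.of _

lemma theta1_nf (n : ℕ) (a b : ℕ) :
    theta1 n (qx n ^ a * qy n ^ b) = Multiplicative.ofAdd ((b : ZMod 2)) := by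
  have hx : theta1 n (qx n) = 1 := PresentedGroup.toGroup.of _
  rw [map_mul, map_pow, map_pow, hx, theta1_qy, one_pow, one_mul, ofadd_one_pow]

lemma theta2_qx (n : ℕ) (hn : 4 ≤ n) : theta2 n hn (qx n) = Multiplicative.ofAdd 1 :=
  PresentedGroup.toGroup.of _

lemma theta2_nf (n : ℕ) (hn : 4 ≤ n) (a b : ℕ) :
    theta2 n hn (qx n ^ a * qy n ^ b) = Multiplicative.ofAdd ((a : ZMod 2) + (b : ZMod 2)) := by
  have hy : theta2 n hn (qy n) = Multiplicative.ofAdd 1 := PresentedGroup.toGroup.of _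
  rw [map_mul, map_pow, map_pow, theta2_qx, hy, ofadd_one_pow, ofadd_one_pow, ← ofAdd_add]

lemma ofadd_ne_one : Multiplicative.ofAdd (1 : ZMod 2) ≠ 1 := by decide

lemma gen_contra (n : ℕ) {d b1 b2 : QA n}
    (hgen : Subgroup.closure {d, b1, b2} = ⊤)
    (θ : QA n →* Multiplicative (ZMod 2)) (h2 : b2 = b1⁻¹ * (d ^ 2)⁻¹)
    (hd : θ d = 1) (hb : θ b1 = 1) (g0 : QA n) (hg : θ g0 ≠ 1) : False := by
  have hsub : Subgroup.closure {d, b1, b2} ≤ θ.ker := by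
    rw [Subgroup.closure_le]
    rintro x (rfl | rfl | rfl) <;> simp only [SetLike.mem_coe, MonoidHom.mem_ker]
    · exact hd
    · exact hb
    · rw [h2, map_mul, map_inv, map_inv, map_pow, hd, hb, inv_one, one_pow, inv_one, one_mul]
  rw [hgen] at hsub
  exact hg (hsub (Subgroup.mem_top g0))

end Theta


section Key

lemma two_pow_sub_eq (n : ℕ) (hn : 4 ≤ n) : (2:ℕ)^(n-1) = 4*2^(n-3) := by
  rw [show (4:ℕ) = 2^2 from rfl, ← pow_add]; congr 1; omega

lemma hkk_nat (n : ℕ) (hn : 4 ≤ n) :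
    2*2^(n-3)*2^(n-3) = 4*2^(n-3)*2^(n-4) := by
  rcases Nat.exists_eq_add_of_le hn with ⟨m, rfl⟩
  have e3 : 4+m-3 = m+1 := by omega
  have e4 : 4+m-4 = m := by omega
  rw [e3, e4, pow_succ]
  ring

lemma two_pow_sub_eq2 (n : ℕ) (hn : 4 ≤ n) : (2:ℕ)^(n-2) = 2*2^(n-3) := by
  rw [show (2:ℕ)*2^(n-3) = 2^(n-3)*2 by ring, ← pow_succ]; congr 1; omega

set_option maxHeartbeats 2000000 in
lemma key (n : ℕ) (hn : 4 ≤ n) (d β₁ β₂ : QA n)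
    (hd : d ∉ H1 n) (hb1 : β₁ ^ 2 = 1)
    (hrel : β₁ * β₂ * d ^ 2 = 1)
    (hgen : Subgroup.closure {d, β₁, β₂} = ⊤) :
    d ^ 2 ^ (n-1) = 1 ∧ β₁ * d * β₁⁻¹ = d ^ (2 ^ (n-2) + 1) ∧
      β₂ = β₁⁻¹ * (d ^ 2)⁻¹ ∧ Subgroup.closure {d, β₁} = (⊤ : Subgroup (QA n)) := by
  set k := 2^(n-3) with hk
  haveI : NeZero (4*k) := ⟨by positivity⟩
  have hβ₂ : β₂ = β₁⁻¹ * (d ^ 2)⁻¹ := by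
    have h' : β₁ * β₂ = (d ^ 2)⁻¹ := mul_eq_one_iff_eq_inv.mp hrel
    rw [← h', ← mul_assoc, inv_mul_cancel, one_mul]
  have hgen2 : Subgroup.closure {d, β₁} = (⊤ : Subgroup (QA n)) := by
    rw [eq_top_iff, ← hgen, Subgroup.closure_le]
    rintro x (rfl | rfl | rfl)
    · exact Subgroup.subset_closure (Set.mem_insert _ _)
    · exact Subgroup.subset_closure (Set.mem_insert_of_mem _ (Set.mem_singleton _))
    · rw [hβ₂]
      exact mul_mem (inv_mem (Subgroup.subset_closure (Set.mem_insert_of_mem _ (Set.mem_singleton _))))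
        (inv_mem (pow_mem (Subgroup.subset_closure (Set.mem_insert _ _)) 2))
  have hd4 : d ^ 2 ^ (n-1) = 1 := by
    apply rho_inj n hn
    rw [map_pow, map_one, two_pow_sub_eq n hn, qm_pow_4k]
  -- coordinates of d and β₁ in the model
  rcases hD : rho n hn d with ⟨a, e⟩
  rcases hB : rho n hn β₁ with ⟨b, f⟩
  have hdnf : d = qx n ^ a.val * qy n ^ e.val := by
    have h := fm_rho n hn d
    rw [hD] at h
    exact h.symm
  have hbnf : β₁ = qx n ^ b.val * qy n ^ f.val := by
    have h := fm_rho n hn β₁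
    rw [hB] at h
    exact h.symm
  have haodd : ((a.val : ZMod 2)) = 1 := by
    rcases zmod2_cases ((a.val : ZMod 2)) with h | h
    · exfalso
      apply hd
      have h2 : 2 ∣ a.val := (ZMod.natCast_eq_zero_iff _ _).mp h
      obtain ⟨t, ht⟩ := h2
      rw [hdnf, ht, pow_mul]
      exact mul_mem (pow_mem (Subgroup.subset_closure (Set.mem_insert _ _)) t)
        (pow_mem (Subgroup.subset_closure (Set.mem_insert_of_mem _ (Set.mem_singleton _))) e.val)
    · exact h
  have hBsq : (⟨b, f⟩ : QM k) ^ 2 = 1 := by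
    rw [← hB, ← map_pow, hb1, map_one]
  have heval : ((e.val : ZMod 2)) = e := ZMod.natCast_zmod_val e
  have hbval : ((b.val : ZMod (4*k))) = b := ZMod.natCast_zmod_val b
  have hfval : ((f.val : ZMod 2)) = f := ZMod.natCast_zmod_val f
  rcases zmod2_cases f with hf | hf
  · -- central case: contradiction with generation
    exfalso
    subst hf
    have hbb : b + b = 0 := by
      rw [qm_sq] at hBsq
      have h := congrArg QM.a hBsq
      simp only [tw_zero, qm_one_def] at h
      linear_combination h
    have hb2 : ((b.val : ZMod 2)) = 0 := by
      have hc : ((2*b.val : ℕ) : ZMod (4*k)) = 0 := by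
        push_cast
        rw [hbval]
        linear_combination hbb
      have hdvd : 4*k ∣ 2*b.val := (ZMod.natCast_eq_zero_iff _ _).mp hc
      obtain ⟨t, ht⟩ := hdvd
      rw [mul_assoc] at ht
      have h2 : 2 ∣ b.val := ⟨k*t, by omega⟩
      exact (ZMod.natCast_eq_zero_iff _ _).mpr h2
    rcases zmod2_cases e with he | he
    · -- d has no y: use theta1
      refine gen_contra n hgen (theta1 n) hβ₂ ?_ ?_ (qy n) ?_
      · rw [hdnf, theta1_nf, heval, he]
        rfl
      · rw [hbnf, theta1_nf, show ((0:ZMod 2).val) = 0 from rfl]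
        rfl
      · rw [theta1_qy]
        exact ofadd_ne_one
    · -- d = x^odd y: use theta2
      refine gen_contra n hgen (theta2 n hn) hβ₂ ?_ ?_ (qx n) ?_
      · rw [hdnf, theta2_nf, haodd, heval, he]
        decide
      · rw [hbnf, theta2_nf, hb2, show ((0:ZMod 2).val) = 0 from rfl]
        decide
      · rw [theta2_qx]
        exact ofadd_ne_one
  · -- main case: β₁ = x^(0 or 2k) y
    subst hf
    refine ⟨hd4, ?_, hβ₂, hgen2⟩
    apply rho_inj n hn
    rw [map_mul, map_mul, map_inv, map_pow, hD, hB]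
    have hkk : 2*(k : ZMod (4*k))*(k : ZMod (4*k)) = 0 := by
      have hc : ((2*k*k : ℕ) : ZMod (4*k)) = 0 := by
        rw [ZMod.natCast_eq_zero_iff]
        refine ⟨2^(n-4), ?_⟩
        rw [hk]
        exact hkk_nat n hn
      push_cast at hc
      linear_combination hc
    rw [qm_conj hkk a b e hBsq, two_pow_sub_eq2 n hn]

end Key


section Main

lemma build_lift (n : ℕ) {D B : QA n} (hD : D ^ 2 ^ (n-1) = 1) (hB : B ^ 2 = 1)
    (hconj : B * D * B⁻¹ = D ^ (2 ^ (n-2) + 1)) :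
    ∀ r ∈ qaRels n, FreeGroup.lift (fun t => cond t D B) r = 1 := by
  intro r hr
  rcases hr with rfl | rfl | rfl
  · rw [map_pow, FreeGroup.lift_apply_of]
    exact hD
  · rw [map_pow, FreeGroup.lift_apply_of]
    exact hB
  · simp only [map_mul, map_inv, map_pow, FreeGroup.lift_apply_of]
    show B * D * B⁻¹ * (D ^ (2 ^ (n-2) + 1))⁻¹ = 1
    rw [hconj, mul_inv_cancel]

lemma qm_finite (n : ℕ) : Finite (QM (2^(n-3))) := by
  haveI : NeZero (4*2^(n-3)) := ⟨by positivity⟩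
  exact Finite.of_injective (fun g : QM (2^(n-3)) => (g.a, g.e))
    (fun u v h => QM.ext (congrArg Prod.fst h) (congrArg Prod.snd h))

/-- Build the automorphism of `QA n` sending `x ↦ D`, `y ↦ B`. -/
lemma build_aut (n : ℕ) (hn : 4 ≤ n) (D B : QA n) (hD : D ^ 2 ^ (n-1) = 1) (hB : B ^ 2 = 1)
    (hconj : B * D * B⁻¹ = D ^ (2 ^ (n-2) + 1))
    (hgen : Subgroup.closure {D, B} = (⊤ : Subgroup (QA n))) :
    ∃ ε : QA n ≃* QA n, ε (qx n) = D ∧ ε (qy n) = B := by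
  haveI : Finite (QM (2^(n-3))) := qm_finite n
  haveI : Finite (QA n) := Finite.of_surjective (fm n) (fm_surj n hn)
  let φ : QA n →* QA n := PresentedGroup.toGroup (build_lift n hD hB hconj)
  have hx : φ (qx n) = D := PresentedGroup.toGroup.of _
  have hy : φ (qy n) = B := PresentedGroup.toGroup.of _
  have hsurj : Function.Surjective φ := by
    rw [← MonoidHom.range_eq_top]
    refine le_antisymm le_top ?_
    rw [← hgen, Subgroup.closure_le]
    rintro x (rfl | rfl)
    · exact ⟨qx n, hx⟩
    · exact ⟨qy n, hy⟩
  have hinj : Function.Injective φ := Finite.injective_iff_surjective.mpr hsurj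
  exact ⟨MulEquiv.ofBijective φ ⟨hinj, hsurj⟩, hx, hy⟩

end Main


/-- For `n ≥ 4`: any two triples `(d, β₁, β₂)` and `(d', β₁', β₂')` of elements of `QA_n`,
each with first entry outside `H₁`, second entry of order `2`, third entry of order
`2^(n-2)`, satisfying `β₁ β₂ d² = 1` (resp. `β₁' β₂' d'² = 1`) and generating `QA_n`,
are related by an automorphism of `QA_n`. -/
theorem stmt13 (n : ℕ) (hn : 4 ≤ n) (d β₁ β₂ d' β₁' β₂' : QA n)
    (hd : d ∉ H1 n) (hβ₁ : orderOf β₁ = 2) (hβ₂ : orderOf β₂ = 2 ^ (n - 2))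
    (hrel : β₁ * β₂ * d ^ 2 = 1)
    (hgen : Subgroup.closure {d, β₁, β₂} = (⊤ : Subgroup (QA n)))
    (hd' : d' ∉ H1 n) (hβ₁' : orderOf β₁' = 2) (hβ₂' : orderOf β₂' = 2 ^ (n - 2))
    (hrel' : β₁' * β₂' * d' ^ 2 = 1)
    (hgen' : Subgroup.closure {d', β₁', β₂'} = (⊤ : Subgroup (QA n))) :
    ∃ φ : MulAut (QA n), φ d = d' ∧ φ β₁ = β₁' ∧ φ β₂ = β₂' := by
  have hb1 : β₁ ^ 2 = 1 := by rw [← hβ₁]; exact pow_orderOf_eq_one β₁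
  have hb1' : β₁' ^ 2 = 1 := by rw [← hβ₁']; exact pow_orderOf_eq_one β₁'
  obtain ⟨hd4, hc, he2, hg2⟩ := key n hn d β₁ β₂ hd hb1 hrel hgen
  obtain ⟨hd4', hc', he2', hg2'⟩ := key n hn d' β₁' β₂' hd' hb1' hrel' hgen'
  obtain ⟨ε₁, hx1, hy1⟩ := build_aut n hn d β₁ hd4 hb1 hc hg2
  obtain ⟨ε₂, hx2, hy2⟩ := build_aut n hn d' β₁' hd4' hb1' hc' hg2'
  refine ⟨ε₁.symm.trans ε₂, ?_, ?_, ?_⟩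
  · show ε₂ (ε₁.symm d) = d'
    rw [(MulEquiv.symm_apply_eq ε₁).mpr hx1.symm, hx2]
  · show ε₂ (ε₁.symm β₁) = β₁'
    rw [(MulEquiv.symm_apply_eq ε₁).mpr hy1.symm, hy2]
  · show ε₂ (ε₁.symm β₂) = β₂'
    rw [he2, he2']
    simp only [map_mul, map_inv, map_pow]
    rw [(MulEquiv.symm_apply_eq ε₁).mpr hx1.symm, (MulEquiv.symm_apply_eq ε₁).mpr hy1.symm,
      hx2, hy2]
end

section
/- Let n ≥ 4. For all elements d_1, d_2, d_3 of the quasi-abelian group QA_n that lie outside the index-two subgroup H_1 = ⟨x^2, y⟩, one has d_1^2 d_2^2 d_3^2 ≠ 1. -/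
namespace QAaux

lemma relator_eq_one {n : ℕ} {r : FreeGroup Bool} (h : r ∈ qaRels n) :
    PresentedGroup.mk (qaRels n) r = 1 := by
  have : r ∈ Subgroup.normalClosure (qaRels n) := Subgroup.subset_normalClosure h
  exact (QuotientGroup.eq_one_iff r).mpr this

lemma rel_conj (n : ℕ) :
    qy n * qx n * (qy n)⁻¹ = qx n ^ (2 ^ (n - 2) + 1) := by
  have h := relator_eq_one (n := n)
    (Set.mem_insert_of_mem _ (Set.mem_insert_of_mem _ rfl))
  have h' : qy n * qx n * (qy n)⁻¹ * (qx n ^ (2 ^ (n - 2) + 1))⁻¹ = 1 := by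
    simpa [qx, qy, PresentedGroup.of, map_mul, map_inv, map_pow] using h
  exact mul_inv_eq_one.mp h'

lemma x_sq_mem (n : ℕ) : qx n ^ 2 ∈ H1 n :=
  Subgroup.subset_closure (Set.mem_insert _ _)

lemma y_mem (n : ℕ) : qy n ∈ H1 n :=
  Subgroup.subset_closure (Set.mem_insert_of_mem _ rfl)

lemma x_even_pow_mem (n k : ℕ) : qx n ^ (2 * k) ∈ H1 n := by
  rw [pow_mul]
  exact pow_mem (x_sq_mem n) k

/-- `x * y * x⁻¹ ∈ H1` -/
lemma conj_y_mem (n : ℕ) (hn : 4 ≤ n) : qx n * qy n * (qx n)⁻¹ ∈ H1 n := by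
  have hrel := rel_conj n
  -- y * x⁻¹ * y⁻¹ = (x ^ m)⁻¹
  have h1 : qy n * (qx n)⁻¹ * (qy n)⁻¹ = (qx n ^ (2 ^ (n - 2) + 1))⁻¹ := by
    rw [← hrel]; group
  -- y * x⁻¹ = (x^m)⁻¹ * y
  have h2 : qy n * (qx n)⁻¹ = (qx n ^ (2 ^ (n - 2) + 1))⁻¹ * qy n := by
    rw [← h1]; group
  have key : qx n * qy n * (qx n)⁻¹
      = (qx n ^ (2 ^ (n - 2)))⁻¹ * qy n := by
    calc qx n * qy n * (qx n)⁻¹ = qx n * (qy n * (qx n)⁻¹) := by group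
    _ = qx n * ((qx n ^ (2 ^ (n - 2) + 1))⁻¹ * qy n) := by rw [h2]
    _ = (qx n ^ (2 ^ (n - 2)))⁻¹ * qy n := by
        rw [pow_succ]
        group
  rw [key]
  have : 2 ^ (n - 2) = 2 * 2 ^ (n - 3) := by
    rw [← pow_succ']
    congr 1
    omega
  rw [this]
  exact mul_mem (inv_mem (x_even_pow_mem n _)) (y_mem n)

/-- `x⁻¹ * y * x ∈ H1` -/
lemma conj_y_mem' (n : ℕ) (hn : 4 ≤ n) : (qx n)⁻¹ * qy n * qx n ∈ H1 n := by
  have hrel := rel_conj n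
  -- y * x = x^m * y
  have h2 : qy n * qx n = qx n ^ (2 ^ (n - 2) + 1) * qy n := by
    rw [← hrel]; group
  have key : (qx n)⁻¹ * qy n * qx n = qx n ^ (2 ^ (n - 2)) * qy n := by
    calc (qx n)⁻¹ * qy n * qx n = (qx n)⁻¹ * (qy n * qx n) := by group
    _ = (qx n)⁻¹ * (qx n ^ (2 ^ (n - 2) + 1) * qy n) := by rw [h2]
    _ = qx n ^ (2 ^ (n - 2)) * qy n := by
        rw [pow_succ']
        group
  rw [key]
  have : 2 ^ (n - 2) = 2 * 2 ^ (n - 3) := by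
    rw [← pow_succ']
    congr 1
    omega
  rw [this]
  exact mul_mem (x_even_pow_mem n _) (y_mem n)

/-- Conjugation by `x` preserves `H1`. -/
lemma conj_mem (n : ℕ) (hn : 4 ≤ n) {h : QA n} (hh : h ∈ H1 n) :
    qx n * h * (qx n)⁻¹ ∈ H1 n := by
  induction hh using Subgroup.closure_induction with
  | mem z hz =>
    rcases hz with rfl | rfl
    · have : qx n * qx n ^ 2 * (qx n)⁻¹ = qx n ^ 2 := by group
      rw [this]; exact x_sq_mem n
    · exact conj_y_mem n hn
  | one => simpa using one_mem (H1 n)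
  | mul a b _ _ ha hb =>
    have : qx n * (a * b) * (qx n)⁻¹ = (qx n * a * (qx n)⁻¹) * (qx n * b * (qx n)⁻¹) := by
      group
    rw [this]; exact mul_mem ha hb
  | inv a _ ha =>
    have : qx n * a⁻¹ * (qx n)⁻¹ = (qx n * a * (qx n)⁻¹)⁻¹ := by group
    rw [this]; exact inv_mem ha

/-- Conjugation by `x⁻¹` preserves `H1`. -/
lemma conj_mem' (n : ℕ) (hn : 4 ≤ n) {h : QA n} (hh : h ∈ H1 n) :
    (qx n)⁻¹ * h * qx n ∈ H1 n := by
  induction hh using Subgroup.closure_induction with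
  | mem z hz =>
    rcases hz with rfl | rfl
    · have : (qx n)⁻¹ * qx n ^ 2 * qx n = qx n ^ 2 := by group
      rw [this]; exact x_sq_mem n
    · exact conj_y_mem' n hn
  | one => simpa using one_mem (H1 n)
  | mul a b _ _ ha hb =>
    have : (qx n)⁻¹ * (a * b) * qx n = ((qx n)⁻¹ * a * qx n) * ((qx n)⁻¹ * b * qx n) := by
      group
    rw [this]; exact mul_mem ha hb
  | inv a _ ha =>
    have : (qx n)⁻¹ * a⁻¹ * qx n = ((qx n)⁻¹ * a * qx n)⁻¹ := by group
    rw [this]; exact inv_mem ha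

/-- Every element of `QA n` lies in `H1` or in the coset `x • H1`. -/
lemma coset_cover (n : ℕ) (hn : 4 ≤ n) (d : QA n) :
    d ∈ H1 n ∨ (qx n)⁻¹ * d ∈ H1 n := by
  have hd : d ∈ Subgroup.closure (Set.range (PresentedGroup.of : Bool → QA n)) := by
    rw [PresentedGroup.closure_range_of]; trivial
  induction hd using Subgroup.closure_induction with
  | mem z hz =>
    obtain ⟨b, rfl⟩ := hz
    cases b
    · left; exact y_mem n
    · right
      have : (qx n)⁻¹ * (PresentedGroup.of true : QA n) = 1 := by
        rw [show (PresentedGroup.of true : QA n) = qx n from rfl]; group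
      rw [this]; exact one_mem _
  | one => left; simpa using one_mem (H1 n)
  | mul a b _ _ ha hb =>
    rcases ha with ha | ha <;> rcases hb with hb | hb
    · left; exact mul_mem ha hb
    · right
      have : (qx n)⁻¹ * (a * b) = ((qx n)⁻¹ * a * qx n) * ((qx n)⁻¹ * b) := by group
      rw [this]; exact mul_mem (conj_mem' n hn ha) hb
    · right
      have : (qx n)⁻¹ * (a * b) = ((qx n)⁻¹ * a) * b := by group
      rw [this]; exact mul_mem ha hb
    · left
      have : a * b = qx n ^ 2 * ((qx n)⁻¹ * ((qx n)⁻¹ * a) * qx n) * ((qx n)⁻¹ * b) := by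
        group
      rw [this]
      exact mul_mem (mul_mem (x_sq_mem n) (conj_mem' n hn ha)) hb
  | inv a _ ha =>
    rcases ha with ha | ha
    · left; exact inv_mem ha
    · right
      have : (qx n)⁻¹ * a⁻¹ = (qx n ^ 2)⁻¹ * (qx n * ((qx n)⁻¹ * a)⁻¹ * (qx n)⁻¹) := by
        group
      rw [this]
      exact mul_mem (inv_mem (x_sq_mem n)) (conj_mem n hn (inv_mem ha))

lemma two_pow_cast (k : ℕ) (hk : 2 ≤ k) : ((2 ^ k : ℕ) : ZMod 4) = 0 := by
  obtain ⟨j, rfl⟩ : ∃ j, k = j + 2 := ⟨k - 2, by omega⟩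
  push_cast
  have h2 : (2 : ZMod 4) ^ 2 = 0 := by decide
  rw [pow_add, h2, mul_zero]

/-- The homomorphism to `Multiplicative (ZMod 4)` sending `x ↦ 1`, `y ↦ 0`. -/
noncomputable def phi (n : ℕ) (hn : 4 ≤ n) : QA n →* Multiplicative (ZMod 4) :=
  PresentedGroup.toGroup (f := fun b => if b then Multiplicative.ofAdd (1 : ZMod 4) else 1)
    (by
      intro r hr
      rcases hr with rfl | rfl | rfl
      · rw [map_pow, FreeGroup.lift_apply_of]
        simp only [if_true]
        rw [← ofAdd_nsmul, nsmul_eq_mul, mul_one,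
          show ((2 ^ (n-1) : ℕ) : ZMod 4) = 0 from two_pow_cast _ (by omega)]
        rfl
      · rw [map_pow, FreeGroup.lift_apply_of]
        simp
      · simp only [map_mul, map_inv, map_pow, FreeGroup.lift_apply_of, if_true,
          if_neg Bool.false_ne_true]
        rw [← ofAdd_nsmul, nsmul_eq_mul, mul_one,
          show ((2 ^ (n-2) + 1 : ℕ) : ZMod 4) = 1 by
            have h := two_pow_cast (n-2) (by omega)
            push_cast at h ⊢
            rw [h]; ring]
        simp)

lemma phi_x (n : ℕ) (hn : 4 ≤ n) : phi n hn (qx n) = Multiplicative.ofAdd (1 : ZMod 4) := by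
  simp [phi, qx, PresentedGroup.toGroup.of]

lemma phi_y (n : ℕ) (hn : 4 ≤ n) : phi n hn (qy n) = 1 := by
  simp [phi, qy, PresentedGroup.toGroup.of]

lemma phi_H1 (n : ℕ) (hn : 4 ≤ n) {h : QA n} (hh : h ∈ H1 n) :
    ∃ a : ZMod 4, phi n hn h = Multiplicative.ofAdd (2 * a) := by
  induction hh using Subgroup.closure_induction with
  | mem z hz =>
    rcases hz with rfl | rfl
    · exact ⟨1, by rw [map_pow, phi_x]; decide⟩
    · exact ⟨0, by rw [phi_y]; decide⟩
  | one => exact ⟨0, by rw [map_one]; simp⟩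
  | mul a b _ _ ha hb =>
    obtain ⟨u, hu⟩ := ha
    obtain ⟨v, hv⟩ := hb
    exact ⟨u + v, by rw [map_mul, hu, hv, ← ofAdd_add]; ring_nf⟩
  | inv a _ ha =>
    obtain ⟨u, hu⟩ := ha
    exact ⟨-u, by rw [map_inv, hu, ← ofAdd_neg]; ring_nf⟩

lemma phi_sq (n : ℕ) (hn : 4 ≤ n) {d : QA n} (hd : d ∉ H1 n) :
    phi n hn (d ^ 2) = Multiplicative.ofAdd (2 : ZMod 4) := by
  rcases coset_cover n hn d with h | h
  · exact absurd h hd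
  · obtain ⟨a, ha⟩ := phi_H1 n hn h
    have hd' : d = qx n * ((qx n)⁻¹ * d) := by group
    have : phi n hn d = Multiplicative.ofAdd (1 + 2 * a) := by
      rw [hd', map_mul, phi_x, ha, ← ofAdd_add]
    rw [map_pow, this, ← ofAdd_nsmul]
    congr 1
    have : (2 : ℕ) • (1 + 2 * a) = 2 + 4 * a := by rw [nsmul_eq_mul]; push_cast; ring
    rw [this]
    have h4 : (4 : ZMod 4) = 0 := by decide
    rw [h4]; ring

end QAaux

/-- For `n ≥ 4` and all `d₁, d₂, d₃ ∈ QA_n \ H₁`, one has `d₁² d₂² d₃² ≠ 1`. -/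
theorem stmt14 (n : ℕ) (hn : 4 ≤ n) (d₁ d₂ d₃ : QA n)
    (h₁ : d₁ ∉ H1 n) (h₂ : d₂ ∉ H1 n) (h₃ : d₃ ∉ H1 n) :
    d₁ ^ 2 * d₂ ^ 2 * d₃ ^ 2 ≠ 1 := by
  intro hcon
  have := congrArg (QAaux.phi n hn) hcon
  rw [map_mul, map_mul, QAaux.phi_sq n hn h₁, QAaux.phi_sq n hn h₂,
    QAaux.phi_sq n hn h₃, map_one] at this
  revert this
  decide
end
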